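/- (GL_n case of Proposition 2.15: red(K ∩ K^t) = P_λ(k).) Let λ : {1,…,n} → ℤ and let t = t_λ. Then the image under entrywise reduction mod p of the group {g ∈ GL_n(ℤ_p) : all entries of t·g·t⁻¹ lie in ℤ_p} equals the parabolic subgroup {ḡ ∈ GL_n(𝔽_p) : ḡ_{ij} = 0 whenever λ(i) < λ(j)} of GL_n(𝔽_p). -/

import Mathlib

/-- The diagonal matrix `t_λ = diag(p^{λ 0}, …, p^{λ (n-1)})` over `ℚ_p`. -/
noncomputable def tdiag (p : ℕ) [Fact p.Prime] {n : ℕ} (μ : Fin n → ℤ) :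
    Matrix (Fin n) (Fin n) ℚ_[p] :=
  Matrix.diagonal fun i => (p : ℚ_[p]) ^ (μ i)

section aux

variable {p : ℕ} [Fact p.Prime] {n : ℕ}

lemma pQp_ne_zero : ((p : ℚ_[p]) : ℚ_[p]) ≠ 0 := by
  exact_mod_cast (Fact.out : p.Prime).ne_zero

lemma tdiag_inv (lam : Fin n → ℤ) :
    (tdiag p lam)⁻¹ = Matrix.diagonal fun i => (p : ℚ_[p]) ^ (-lam i) := by
  apply Matrix.inv_eq_right_inv
  rw [tdiag, Matrix.diagonal_mul_diagonal]
  have : (fun i => (p : ℚ_[p]) ^ (lam i) * (p : ℚ_[p]) ^ (-lam i)) = fun _ => (1 : ℚ_[p]) := by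
    funext i
    rw [← zpow_add₀ pQp_ne_zero]
    simp
  rw [this, Matrix.diagonal_one]

lemma entry_eq (lam : Fin n → ℤ) (g : Matrix (Fin n) (Fin n) ℚ_[p]) (i j : Fin n) :
    (tdiag p lam * g * (tdiag p lam)⁻¹) i j = (p : ℚ_[p]) ^ (lam i - lam j) * g i j := by
  rw [tdiag_inv, Matrix.mul_diagonal, tdiag, Matrix.diagonal_mul,
    sub_eq_add_neg, zpow_add₀ pQp_ne_zero]
  ring

lemma toZMod_eq_zero_iff (x : ℤ_[p]) : PadicInt.toZMod x = 0 ↔ (p : ℤ_[p]) ∣ x := by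
  rw [← RingHom.mem_ker, PadicInt.ker_toZMod, PadicInt.maximalIdeal_eq_span_p,
    Ideal.mem_span_singleton]

end aux

/-- `GL_n` case of Proposition 2.15: `red(K ∩ K^t) = P_λ(k)`: the image,
under entrywise reduction mod `p`, of the set of `g ∈ GL_n(ℤ_p)` such that all entries of
`t g t⁻¹` (with `t = t_λ`) are in `ℤ_p`, equals the parabolic subgroup of `GL_n(𝔽_p)` of
matrices `ḡ` with `ḡ i j = 0` whenever `λ i < λ j`. -/
theorem statement5 (p : ℕ) [Fact p.Prime] (n : ℕ) (lam : Fin n → ℤ) :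
    (fun g : Matrix (Fin n) (Fin n) ℤ_[p] => g.map (fun x => (PadicInt.toZMod x : ZMod p))) ''
        {g : Matrix (Fin n) (Fin n) ℤ_[p] | IsUnit g.det ∧
          ∀ i j, ‖(tdiag p lam * g.map (fun x : ℤ_[p] => (x : ℚ_[p])) * (tdiag p lam)⁻¹) i j‖ ≤ 1} =
      {gbar : Matrix (Fin n) (Fin n) (ZMod p) | IsUnit gbar.det ∧
        ∀ i j : Fin n, lam i < lam j → gbar i j = 0} := by
  have hp1 : (1 : ℝ) < (p : ℝ) := by exact_mod_cast (Fact.out : p.Prime).one_lt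
  have hp0 : (0 : ℝ) < (p : ℝ) := lt_trans one_pos hp1
  ext gbar
  constructor
  · rintro ⟨g, ⟨hdet, hint⟩, rfl⟩
    constructor
    · show IsUnit (Matrix.det (g.map _))
      have h := hdet.map PadicInt.toZMod
      rw [RingHom.map_det] at h
      exact h
    · intro i j hij
      have h := hint i j
      rw [entry_eq] at h
      rw [Matrix.map_apply] at h
      rw [norm_mul, Padic.norm_p_zpow] at h
      have hnorm : ‖g i j‖ < 1 := by
        have hgle : ‖(g i j : ℚ_[p])‖ ≤ (p : ℝ) ^ (lam i - lam j) := by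
          have hpos : (0 : ℝ) < (p : ℝ) ^ (-(lam i - lam j)) := zpow_pos hp0 _
          calc ‖(g i j : ℚ_[p])‖
              = ((p : ℝ) ^ (-(lam i - lam j)) * ‖(g i j : ℚ_[p])‖) * (p : ℝ) ^ (lam i - lam j) := by
                rw [mul_comm ((p:ℝ) ^ (-(lam i - lam j))), mul_assoc, ← zpow_add₀ hp0.ne',
                  neg_add_cancel, zpow_zero, mul_one]
            _ ≤ 1 * (p : ℝ) ^ (lam i - lam j) := by
                apply mul_le_mul_of_nonneg_right h (le_of_lt (zpow_pos hp0 _))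
            _ = (p : ℝ) ^ (lam i - lam j) := one_mul _
        have : (p : ℝ) ^ (lam i - lam j) < 1 := by
          have : lam i - lam j < 0 := sub_neg.mpr hij
          exact zpow_lt_one_of_neg₀ hp1 this
        calc ‖g i j‖ = ‖(g i j : ℚ_[p])‖ := PadicInt.norm_def
          _ ≤ _ := hgle
          _ < 1 := this
      show PadicInt.toZMod (g i j) = 0
      rw [toZMod_eq_zero_iff]
      exact (PadicInt.norm_lt_one_iff_dvd _).mp hnorm
  · rintro ⟨hdet, hzero⟩
    set g : Matrix (Fin n) (Fin n) ℤ_[p] :=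
      Matrix.of fun i j => if lam i < lam j then 0 else ((gbar i j).val : ℤ_[p]) with hg
    have hgapp : ∀ i j, g i j = if lam i < lam j then 0 else ((gbar i j).val : ℤ_[p]) :=
      fun i j => rfl
    have hmap : g.map (fun x => (PadicInt.toZMod x : ZMod p)) = gbar := by
      ext i j
      rw [Matrix.map_apply, hgapp]
      by_cases h : lam i < lam j
      · simp [h, (hzero i j h).symm]
      · simp only [h, if_false, map_natCast]
        exact ZMod.natCast_rightInverse _
    have hdetmap : PadicInt.toZMod g.det = gbar.det := by
      rw [RingHom.map_det]
      exact congrArg Matrix.det hmap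
    refine ⟨g, ⟨?_, ?_⟩, hmap⟩
    · rw [PadicInt.isUnit_iff]
      by_contra hne
      have hlt : ‖g.det‖ < 1 := lt_of_le_of_ne (PadicInt.norm_le_one _) hne
      have : PadicInt.toZMod g.det = 0 :=
        (toZMod_eq_zero_iff _).mpr ((PadicInt.norm_lt_one_iff_dvd _).mp hlt)
      rw [hdetmap] at this
      exact hdet.ne_zero this
    · intro i j
      rw [entry_eq, Matrix.map_apply, norm_mul, Padic.norm_p_zpow]
      by_cases h : lam i < lam j
      · rw [hgapp, if_pos h]
        simp
      · have h1 : ‖((g i j : ℤ_[p]) : ℚ_[p])‖ ≤ 1 := by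
          rw [← PadicInt.norm_def]; exact PadicInt.norm_le_one _
        have h2 : (p : ℝ) ^ (-(lam i - lam j)) ≤ 1 := by
          apply zpow_le_one_of_nonpos₀ hp1.le
          omega
        calc (p : ℝ) ^ (-(lam i - lam j)) * ‖((g i j : ℤ_[p]) : ℚ_[p])‖
            ≤ 1 * 1 := mul_le_mul h2 h1 (norm_nonneg _) zero_le_one
          _ = 1 := one_mul 1
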